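/- For integers b, s, t with 0 ≤ b ≤ t-1 and 1 ≤ s, det M_{t,b,s,s} = det M_{b+s,b,t-b,t-b}, where M_{t,b,s,s} denotes the s×s matrix with (i,j) entry C(t, b+i-j). -/

import Mathlib

open Matrix Finset

namespace DJ

/-- inner embedding -/
def inE (n : ℕ) : Fin n → Fin (n + 2) := fun i => i.succ.castSucc

lemma inE_ne_zero {n : ℕ} (j : Fin n) : inE n j ≠ 0 := by
  simp [inE, Fin.ext_iff]

lemma inE_ne_last {n : ℕ} (j : Fin n) : inE n j ≠ Fin.last (n + 1) := by
  simp [inE, Fin.ext_iff]; omega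

lemma zero_ne_last (n : ℕ) : (0 : Fin (n+2)) ≠ Fin.last (n+1) := by
  simp [Fin.ext_iff]

/-- the corner equivalence -/
noncomputable def cornerEquiv (n : ℕ) : (Fin 2 ⊕ Fin n) ≃ Fin (n + 2) :=
  Equiv.ofBijective (Sum.elim (fun r => if r = 0 then (0 : Fin (n+2)) else Fin.last (n+1)) (inE n))
  (by
    rw [Fintype.bijective_iff_injective_and_card]
    refine ⟨?_, by simp [add_comm]⟩
    rintro (r | j) (r' | j') h <;>
      simp only [Sum.elim_inl, Sum.elim_inr] at h
    · fin_cases r <;> fin_cases r' <;> simp_all [Fin.ext_iff]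
    · exfalso; fin_cases r <;> simp at h
      · exact inE_ne_zero j' h.symm
      · exact inE_ne_last j' h.symm
    · exfalso; fin_cases r' <;> simp at h
      · exact inE_ne_zero j h
      · exact inE_ne_last j h
    · congr 1
      have := h
      simp [inE, Fin.ext_iff] at this
      exact Fin.ext this)

end DJ

namespace DJ2
open DJ

variable {K : Type*} [Field K]

lemma det_updateCol_mul {m : Type*} [DecidableEq m] [Fintype m]
    (M : Matrix m m K) (j : m) (c : K) (u : m → K) :
    (M.updateCol j (fun i => c * u i)).det = c * (M.updateCol j u).det := by
  rw [show (fun i => c * u i) = c • u from rfl, Matrix.det_updateCol_smul]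

theorem dodgson_field {n : ℕ} (A : Matrix (Fin (n+2)) (Fin (n+2)) K) (hA : A.det ≠ 0) :
    A.det * (A.submatrix (inE n) (inE n)).det =
      (A.submatrix Fin.castSucc Fin.castSucc).det * (A.submatrix Fin.succ Fin.succ).det -
      (A.submatrix Fin.castSucc Fin.succ).det * (A.submatrix Fin.succ Fin.castSucc).det := by
  classical
  set d := A.det with hd
  set B := A.adjugate with hB
  set l : Fin (n+2) := Fin.last (n+1) with hl
  have hl0 : l ≠ 0 := (zero_ne_last n).symm
  set u0 : Fin (n+2) → K := fun i => if i = 0 then 1 else 0 with hu0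
  set ul : Fin (n+2) → K := fun i => if i = l then 1 else 0 with hul
  set N : Matrix (Fin (n+2)) (Fin (n+2)) K :=
    Matrix.of (fun i j => if j = 0 then B i 0 else if j = l then B i l
      else if i = j then 1 else 0) with hN
  set E : Matrix (Fin (n+2)) (Fin (n+2)) K :=
    Matrix.of (fun i j => if j = 0 then u0 i else if j = l then ul i else A i j) with hE
  have hABd : A * B = d • (1 : Matrix (Fin (n+2)) (Fin (n+2)) K) := Matrix.mul_adjugate A
  have hmul : A * N = Matrix.of (fun i j => if j = 0 then d * u0 i
      else if j = l then d * ul i else A i j) := by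
    ext i j
    by_cases h0 : j = 0
    · subst h0
      have : (A * N) i 0 = (A * B) i 0 := by
        rw [Matrix.mul_apply, Matrix.mul_apply]
        exact Finset.sum_congr rfl fun k _ => by simp [hN]
      rw [this, hABd]
      simp [Matrix.one_apply, hu0, mul_ite]
    · by_cases h1 : j = l
      · subst h1
        have : (A * N) i l = (A * B) i l := by
          rw [Matrix.mul_apply, Matrix.mul_apply]
          refine Finset.sum_congr rfl fun k _ => ?_
          rw [hN]
          simp [hl0]
        rw [this, hABd]
        simp [Matrix.one_apply, hl0, hul, mul_ite]
      · have : (A * N) i j = A i j := by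
          rw [Matrix.mul_apply]
          have hterm : ∀ k, A i k * N k j = if k = j then A i k else 0 := by
            intro k
            rw [hN]
            simp only [Matrix.of_apply, if_neg h0, if_neg h1]
            by_cases hkj : k = j <;> simp [hkj]
          simp only [hterm]
          simp
        rw [this]
        simp [h0, h1]
  have hdetC2 : (A * N).det = d * (d * E.det) := by
    have e1 : A * N = (E.updateCol l (fun i => d * ul i)).updateCol 0
        (fun i => d * u0 i) := by
      rw [hmul]
      ext i j
      simp only [Matrix.updateCol_apply, Matrix.of_apply, hE]
      by_cases h0 : j = 0 <;> by_cases h1 : j = l <;> simp_all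
    have e3 : (E.updateCol l (fun i => d * ul i)).updateCol 0 u0
        = (E.updateCol 0 u0).updateCol l (fun i => d * ul i) := by
      ext i j
      simp only [Matrix.updateCol_apply]
      by_cases h0 : j = 0 <;> by_cases h1 : j = l <;> simp_all
    have e4 : (E.updateCol 0 u0).updateCol l ul = E := by
      ext i j
      simp only [Matrix.updateCol_apply, hE, Matrix.of_apply]
      by_cases h0 : j = 0 <;> by_cases h1 : j = l <;> simp_all
    rw [e1, det_updateCol_mul, e3, det_updateCol_mul, e4]
  have hdetE : E.det = (A.submatrix (inE n) (inE n)).det := by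
    rw [Matrix.det_succ_column_zero]
    rw [Finset.sum_eq_single 0]
    · have h00 : E 0 0 = 1 := by simp [hE, hu0]
      rw [h00, Fin.succAbove_zero]
      simp only [Fin.val_zero, pow_zero, one_mul, mul_one]
      set M1 := E.submatrix Fin.succ Fin.succ with hM1
      rw [Matrix.det_succ_column M1 (Fin.last n)]
      rw [Finset.sum_eq_single (Fin.last n)]
      · have hentry : M1 (Fin.last n) (Fin.last n) = 1 := by
          simp [hM1, Matrix.submatrix_apply, hE, hul, hl, hl0, Fin.succ_last]
        rw [hentry]
        have hsign : (-1 : K) ^ ((Fin.last n : ℕ) + (Fin.last n : ℕ)) = 1 :=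
          Even.neg_one_pow ⟨n, by simp [Fin.val_last]⟩
        rw [hsign, Fin.succAbove_last]
        simp only [one_mul, mul_one]
        congr 1
        rw [Matrix.submatrix_submatrix]
        ext i j
        simp only [Matrix.submatrix_apply, Function.comp_apply, hE, Matrix.of_apply,
          Fin.succ_castSucc]
        rw [if_neg, if_neg]
        · rfl
        · exact inE_ne_last j
        · exact inE_ne_zero j
      · intro b _ hb
        have : M1 b (Fin.last n) = 0 := by
          have : b.succ ≠ l := by
            rw [hl, ← Fin.succ_last]
            exact fun hc => hb (Fin.succ_injective _ hc)
          simp [hM1, Matrix.submatrix_apply, hE, hul, hl0, Fin.succ_last, this, hl, hb]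
        rw [this]
        ring
      · intro h; exact absurd (Finset.mem_univ _) h
    · intro b _ hb
      have : E b 0 = 0 := by simp [hE, hu0, hb]
      rw [this]
      ring
    · intro h; exact absurd (Finset.mem_univ _) h
  have hNdet : N.det = B 0 0 * B l l - B 0 l * B l 0 := by
    rw [← Matrix.det_submatrix_equiv_self (cornerEquiv n) N]
    have hblock : N.submatrix (cornerEquiv n) (cornerEquiv n) =
        Matrix.fromBlocks (Matrix.of ![![B 0 0, B 0 l], ![B l 0, B l l]]) 0
          (Matrix.of fun (i : Fin n) (r : Fin 2) =>
            N (inE n i) (if r = 0 then 0 else l)) 1 := by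
      ext i j
      cases i with
      | inl r =>
        cases j with
        | inl r' =>
          fin_cases r <;> fin_cases r' <;>
            simp [cornerEquiv, Equiv.ofBijective, Matrix.submatrix_apply, hN, hl0, hl]
        | inr j' =>
          have hne0 : inE n j' ≠ 0 := inE_ne_zero j'
          have hnel : inE n j' ≠ l := inE_ne_last j'
          fin_cases r <;>
            simp [cornerEquiv, Equiv.ofBijective, Matrix.submatrix_apply, hN, hne0, hnel,
              (hne0.symm : (0 : Fin (n+2)) ≠ inE n j'), (hnel.symm : l ≠ inE n j'), hl, inE_ne_last j', (inE_ne_last j').symm]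
      | inr i' =>
        cases j with
        | inl r' =>
          fin_cases r' <;>
            simp [cornerEquiv, Equiv.ofBijective, Matrix.submatrix_apply, hl]
        | inr j' =>
          have hne0 : inE n j' ≠ 0 := inE_ne_zero j'
          have hnel : inE n j' ≠ l := inE_ne_last j'
          have hinj : inE n i' = inE n j' ↔ i' = j' := by
            constructor
            · intro h
              have := congrArg Fin.val h
              simp [inE, Fin.ext_iff] at this ⊢
              exact this
            · intro h; rw [h]
          simp [cornerEquiv, Equiv.ofBijective, Matrix.submatrix_apply, hN, hne0, hnel,
            Matrix.one_apply, hinj]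
    rw [hblock, Matrix.det_fromBlocks_zero₁₂, Matrix.det_one, mul_one]
    rw [Matrix.det_fin_two]
    simp
  have hB00 : B 0 0 = (A.submatrix Fin.succ Fin.succ).det := by
    rw [hB, Matrix.adjugate_fin_succ_eq_det_submatrix]
    simp
  have hBll : B l l = (A.submatrix Fin.castSucc Fin.castSucc).det := by
    rw [hB, Matrix.adjugate_fin_succ_eq_det_submatrix, hl]
    rw [Fin.succAbove_last]
    have : (-1 : K) ^ ((Fin.last (n+1) : ℕ) + (Fin.last (n+1) : ℕ)) = 1 :=
      Even.neg_one_pow ⟨n+1, by simp [Fin.val_last]⟩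
    rw [this, one_mul]
  have hB0l : B 0 l = (-1 : K)^(n+1) * (A.submatrix Fin.castSucc Fin.succ).det := by
    rw [hB, Matrix.adjugate_fin_succ_eq_det_submatrix, hl]
    rw [Fin.succAbove_last, Fin.succAbove_zero]
    simp [Fin.val_last]
  have hBl0 : B l 0 = (-1 : K)^(n+1) * (A.submatrix Fin.succ Fin.castSucc).det := by
    rw [hB, Matrix.adjugate_fin_succ_eq_det_submatrix, hl]
    rw [Fin.succAbove_last, Fin.succAbove_zero]
    simp [Fin.val_last]
  have h1 : d * N.det = d * (d * E.det) := by rw [← Matrix.det_mul, hdetC2]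
  have h2 : N.det = d * E.det := mul_left_cancel₀ hA h1
  have hs : ((-1:K)^(n+1)) * ((-1:K)^(n+1)) = 1 := by
    rw [← pow_add]; exact Even.neg_one_pow ⟨n+1, rfl⟩
  rw [← hdetE, ← h2, hNdet, hB00, hBll, hB0l, hBl0]
  linear_combination (-((A.submatrix Fin.castSucc Fin.succ).det *
    (A.submatrix Fin.succ Fin.castSucc).det)) * hs

end DJ2

namespace DJ3
open DJ DJ2

theorem dodgson {R : Type*} [CommRing R] {n : ℕ} (A : Matrix (Fin (n+2)) (Fin (n+2)) R) :
    A.det * (A.submatrix (inE n) (inE n)).det =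
      (A.submatrix Fin.castSucc Fin.castSucc).det * (A.submatrix Fin.succ Fin.succ).det -
      (A.submatrix Fin.castSucc Fin.succ).det * (A.submatrix Fin.succ Fin.castSucc).det := by
  classical
  set R₀ := MvPolynomial (Fin (n+2) × Fin (n+2)) ℤ with hR₀
  set K := FractionRing R₀ with hK
  set G : Matrix (Fin (n+2)) (Fin (n+2)) R₀ :=
    Matrix.of (fun i j => MvPolynomial.X (i, j)) with hG
  have hGdet : G.det ≠ 0 := by
    intro h0
    have h1 : (MvPolynomial.eval (fun p : Fin (n+2) × Fin (n+2) =>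
        if p.1 = p.2 then (1:ℤ) else 0)) G.det = 1 := by
      rw [RingHom.map_det, RingHom.mapMatrix_apply]
      have : G.map (MvPolynomial.eval (fun p : Fin (n+2) × Fin (n+2) =>
          if p.1 = p.2 then (1:ℤ) else 0)) = (1 : Matrix (Fin (n+2)) (Fin (n+2)) ℤ) := by
        ext i j
        simp [hG, Matrix.map_apply, Matrix.one_apply]
      rw [this, Matrix.det_one]
    rw [h0, map_zero] at h1
    exact zero_ne_one h1
  have key : G.det * (G.submatrix (inE n) (inE n)).det =
      (G.submatrix Fin.castSucc Fin.castSucc).det * (G.submatrix Fin.succ Fin.succ).det -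
      (G.submatrix Fin.castSucc Fin.succ).det * (G.submatrix Fin.succ Fin.castSucc).det := by
    have hinj : Function.Injective (algebraMap R₀ K) := IsFractionRing.injective R₀ K
    apply hinj
    have hG'det : (G.map (algebraMap R₀ K)).det ≠ 0 := by
      rw [← RingHom.mapMatrix_apply, ← RingHom.map_det]
      intro hc
      exact hGdet (hinj (by rw [hc, map_zero]))
    have := dodgson_field (G.map (algebraMap R₀ K)) hG'det
    rw [Matrix.submatrix_map, Matrix.submatrix_map, Matrix.submatrix_map, Matrix.submatrix_map,
      Matrix.submatrix_map] at this
    simp only [← RingHom.mapMatrix_apply, ← RingHom.map_det] at this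
    rw [_root_.map_mul, _root_.map_sub, _root_.map_mul, _root_.map_mul]
    exact this
  have hφ := congrArg (MvPolynomial.eval₂Hom (Int.castRingHom R) (fun p : Fin (n+2) × Fin (n+2) => A p.1 p.2)) key
  set φ := MvPolynomial.eval₂Hom (Int.castRingHom R)
    (fun p : Fin (n+2) × Fin (n+2) => A p.1 p.2) with hφdef
  have hGA : G.map φ = A := by
    ext i j
    simp [hG, Matrix.map_apply, hφdef, MvPolynomial.eval₂Hom_X']
  rw [_root_.map_mul, _root_.map_sub, _root_.map_mul, _root_.map_mul] at hφ
  simp only [RingHom.map_det, RingHom.mapMatrix_apply, ← Matrix.submatrix_map, hGA] at hφ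
  exact hφ

end DJ3

open Nat Finset Matrix


noncomputable def Ff (b c s : ℕ) : ℚ :=
  ∏ i ∈ Finset.range s, ((i ! : ℚ) * (((b + c + i)! : ℕ) : ℚ)) / ((((b + i)! : ℕ) : ℚ) * (((c + i)! : ℕ) : ℚ))

lemma factQ_pos (m : ℕ) : (0:ℚ) < (m ! : ℚ) := by exact_mod_cast m.factorial_pos

lemma factQ_ne (m : ℕ) : ((m ! : ℚ)) ≠ 0 := (factQ_pos m).ne'

lemma Ff_pos (b c s : ℕ) : 0 < Ff b c s :=
  Finset.prod_pos fun i _ =>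
    div_pos (mul_pos (factQ_pos _) (factQ_pos _)) (mul_pos (factQ_pos _) (factQ_pos _))

lemma Ff_ne (b c s : ℕ) : Ff b c s ≠ 0 := (Ff_pos _ _ _).ne'

lemma Ff_succ (b c s : ℕ) : Ff b c (s+1) =
    Ff b c s * ((s ! : ℚ) * (((b + c + s)! : ℕ) : ℚ) / ((((b + s)! : ℕ) : ℚ) * (((c + s)! : ℕ) : ℚ))) :=
  Finset.prod_range_succ _ s

lemma tel (x : ℚ) (k : ℕ) :
    (∏ i ∈ range k, (x + 1 + i)) * x = (∏ i ∈ range k, (x + i)) * (x + k) := by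
  have h1 := Finset.prod_range_succ (fun i : ℕ => x + i) k
  have h2 := Finset.prod_range_succ' (fun i : ℕ => x + i) k
  have h3 : (∏ i ∈ range k, (x + ((i+1 : ℕ) : ℚ))) = ∏ i ∈ range k, (x + 1 + i) :=
    prod_congr rfl fun i _ => by push_cast; ring
  rw [h3] at h2
  calc (∏ i ∈ range k, (x + 1 + i)) * x
      = (∏ i ∈ range k, (x + 1 + i)) * (x + ((0:ℕ):ℚ)) := by norm_num
    _ = ∏ i ∈ range (k+1), (x + i) := h2.symm
    _ = (∏ i ∈ range k, (x + i)) * (x + k) := h1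

lemma uv (b c k : ℕ) :
    ((∏ i ∈ range k, (((b:ℚ) + 1 + i) / ((c:ℚ) + 2 + i))) *
      (∏ i ∈ range k, (((c:ℚ) + 1 + i) / ((b:ℚ) + 2 + i)))) *
      (((b:ℚ) + 1 + k) * ((c:ℚ) + 1 + k)) =
    ((b:ℚ) + 1) * ((c:ℚ) + 1) := by
  rw [Finset.prod_div_distrib, Finset.prod_div_distrib]
  have hPb : (0:ℚ) < ∏ i ∈ range k, ((b:ℚ) + 1 + i) := prod_pos fun i _ => by positivity
  have hPc : (0:ℚ) < ∏ i ∈ range k, ((c:ℚ) + 1 + i) := prod_pos fun i _ => by positivity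
  have hQb : (0:ℚ) < ∏ i ∈ range k, ((b:ℚ) + 2 + i) := prod_pos fun i _ => by positivity
  have hQc : (0:ℚ) < ∏ i ∈ range k, ((c:ℚ) + 2 + i) := prod_pos fun i _ => by positivity
  have eb : (∏ i ∈ range k, ((b:ℚ) + 2 + i)) = ∏ i ∈ range k, ((b:ℚ) + 1 + 1 + i) :=
    prod_congr rfl fun i _ => by ring
  have ec : (∏ i ∈ range k, ((c:ℚ) + 2 + i)) = ∏ i ∈ range k, ((c:ℚ) + 1 + 1 + i) :=
    prod_congr rfl fun i _ => by ring
  have tb := tel ((b:ℚ) + 1) k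
  have tc := tel ((c:ℚ) + 1) k
  rw [eb, ec]
  have hb1 : ((b:ℚ) + 1) ≠ 0 := by positivity
  have hc1 : ((c:ℚ) + 1) ≠ 0 := by positivity
  field_simp
  linear_combination (-((∏ i ∈ range k, ((c:ℚ) + 1 + 1 + i)) * ((c:ℚ)+1))) * tb +
    (-((∏ i ∈ range k, ((b:ℚ) + 1 + i)) * ((b:ℚ)+1+k))) * tc


lemma Ff_shift_left (b c k : ℕ) :
    Ff b (c+2) k = Ff (b+1) (c+1) k * ∏ i ∈ range k, (((b:ℚ)+1+i)/((c:ℚ)+2+i)) := by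
  rw [Ff, Ff, ← Finset.prod_mul_distrib]
  refine prod_congr rfl fun i _ => ?_
  rw [show b + (c+2) + i = b+1+(c+1)+i from by omega]
  rw [show (c+2)+i = ((c+1)+i)+1 from by omega, Nat.factorial_succ ((c+1)+i)]
  rw [show (b+1)+i = (b+i)+1 from by omega, Nat.factorial_succ (b+i)]
  have h1 := factQ_ne (b+i)
  have h2 := factQ_ne ((c+1)+i)
  have h3 : ((c:ℚ) + 2 + i) ≠ 0 := by positivity
  have h4 : (((b+i : ℕ)+1 : ℕ) : ℚ) ≠ 0 := by positivity
  field_simp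
  push_cast
  ring

lemma Ff_shift_right (b c k : ℕ) :
    Ff (b+2) c k = Ff (b+1) (c+1) k * ∏ i ∈ range k, (((c:ℚ)+1+i)/((b:ℚ)+2+i)) := by
  rw [Ff, Ff, ← Finset.prod_mul_distrib]
  refine prod_congr rfl fun i _ => ?_
  rw [show (b+2) + c + i = b+1+(c+1)+i from by omega]
  rw [show (b+2)+i = ((b+1)+i)+1 from by omega, Nat.factorial_succ ((b+1)+i)]
  rw [show (c+1)+i = (c+i)+1 from by omega, Nat.factorial_succ (c+i)]
  have h1 := factQ_ne (c+i)
  have h2 := factQ_ne ((b+1)+i)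
  have h3 : ((b:ℚ) + 2 + i) ≠ 0 := by positivity
  have h4 : (((c+i : ℕ)+1 : ℕ) : ℚ) ≠ 0 := by positivity
  field_simp
  push_cast
  ring

lemma quad (b c n : ℕ) :
    Ff (b+1) (c+1) (n+2) * Ff (b+1) (c+1) n =
      Ff (b+1) (c+1) (n+1)^2 - Ff b (c+2) (n+1) * Ff (b+2) c (n+1) := by
  have e1 := Ff_succ (b+1) (c+1) n
  have e2 := Ff_succ (b+1) (c+1) (n+1)
  have e3 := Ff_shift_left b c (n+1)
  have e4 := Ff_shift_right b c (n+1)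
  have e5 := uv b c (n+1)
  set u := ∏ i ∈ range (n+1), (((b:ℚ)+1+i)/((c:ℚ)+2+i)) with hu
  set v := ∏ i ∈ range (n+1), (((c:ℚ)+1+i)/((b:ℚ)+2+i)) with hv
  have hsc : (((n+1)! : ℚ) * (((b+1+(c+1)+(n+1))! : ℕ) : ℚ)) /
        ((((b+1+(n+1))! : ℕ):ℚ) * (((c+1+(n+1))! : ℕ):ℚ))
      = ((n ! : ℚ) * (((b+1+(c+1)+n)! : ℕ):ℚ)) /
          ((((b+1+n)! : ℕ):ℚ) * (((c+1+n)! : ℕ):ℚ)) * (1 - u*v) := by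
    rw [show b+1+(c+1)+(n+1) = (b+1+(c+1)+n)+1 from by omega,
        Nat.factorial_succ (b+1+(c+1)+n)]
    rw [show b+1+(n+1) = (b+1+n)+1 from by omega, Nat.factorial_succ (b+1+n)]
    rw [show c+1+(n+1) = (c+1+n)+1 from by omega, Nat.factorial_succ (c+1+n)]
    rw [Nat.factorial_succ n]
    have h1 := factQ_ne n
    have h2 := factQ_ne (b+1+(c+1)+n)
    have h3 := factQ_ne (b+1+n)
    have h4 := factQ_ne (c+1+n)
    have h5 : ((b:ℚ)+1+n+1) ≠ 0 := by positivity
    have h6 : ((c:ℚ)+1+n+1) ≠ 0 := by positivity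
    push_cast
    push_cast at e5
    rw [div_mul_eq_mul_div, div_eq_div_iff (by positivity) (by positivity)]
    linear_combination ((n ! : ℚ) * (((b+1+(c+1)+n)! : ℕ):ℚ) * (((b+1+n)! : ℕ):ℚ) *
      (((c+1+n)! : ℕ):ℚ)) * e5
  rw [e3, e4, e2, e1, hsc]
  ring


lemma prodshift (m k : ℕ) :
    (∏ i ∈ range k, ((m:ℚ) + 1 + i)) * (m ! : ℚ) = (((m + k)! : ℕ) : ℚ) := by
  induction k with
  | zero => simp
  | succ k ih =>
    rw [prod_range_succ]
    have h : (((m+(k+1))! : ℕ) : ℚ) = ((m:ℚ)+1+k) * (((m+k)! : ℕ) : ℚ) := by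
      rw [show m+(k+1) = (m+k)+1 from by omega, Nat.factorial_succ]
      push_cast; ring
    rw [h, ← ih]; ring

lemma Ff_eq_S (b c s : ℕ) : Ff b c s =
    ∏ j ∈ range b, ((((c+j+s)! : ℕ) : ℚ) * (j ! : ℚ)) / ((((c+j)! : ℕ) : ℚ) * (((j+s)! : ℕ) : ℚ)) := by
  have step1 : Ff b c s = ∏ i ∈ range s, ∏ j ∈ range b, (((c:ℚ)+i+j+1) / ((i:ℚ)+j+1)) := by
    refine prod_congr rfl fun i _ => ?_
    rw [Finset.prod_div_distrib]
    have p1 : (∏ j ∈ range b, ((c:ℚ)+i+j+1)) * (((c+i)! : ℕ) : ℚ) = (((c+i+b)! : ℕ) : ℚ) := by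
      have h := prodshift (c+i) b
      have he : (∏ j ∈ range b, (((c+i : ℕ):ℚ) + 1 + j)) = ∏ j ∈ range b, ((c:ℚ)+i+j+1) :=
        prod_congr rfl fun j _ => by push_cast; ring
      rw [he] at h
      rw [h]
    have p2 : (∏ j ∈ range b, ((i:ℚ)+j+1)) * (i ! : ℚ) = (((i+b)! : ℕ) : ℚ) := by
      have h := prodshift i b
      have he : (∏ j ∈ range b, ((i:ℚ) + 1 + j)) = ∏ j ∈ range b, ((i:ℚ)+j+1) :=
        prod_congr rfl fun j _ => by ring
      rw [he] at h
      rw [h]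
    rw [show b + c + i = c+i+b from by omega, show b + i = i+b from by omega]
    have h1 := factQ_ne (i+b)
    have h2 := factQ_ne (c+i)
    have h3 : (∏ j ∈ range b, ((i:ℚ)+j+1)) ≠ 0 :=
      (prod_pos fun j _ => by positivity).ne'
    field_simp
    linear_combination ((((c+i+b)! : ℕ):ℚ)) * p2 - (((i+b)! : ℕ):ℚ) * p1
  rw [step1, Finset.prod_comm]
  refine prod_congr rfl fun j _ => ?_
  rw [Finset.prod_div_distrib]
  have p1 : (∏ i ∈ range s, ((c:ℚ)+i+j+1)) * (((c+j)! : ℕ) : ℚ) = (((c+j+s)! : ℕ) : ℚ) := by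
    have h := prodshift (c+j) s
    have he : (∏ i ∈ range s, (((c+j : ℕ):ℚ) + 1 + i)) = ∏ i ∈ range s, ((c:ℚ)+i+j+1) :=
      prod_congr rfl fun i _ => by push_cast; ring
    rw [he] at h
    rw [h]
  have p2 : (∏ i ∈ range s, ((i:ℚ)+j+1)) * (j ! : ℚ) = (((j+s)! : ℕ) : ℚ) := by
    have h := prodshift j s
    have he : (∏ i ∈ range s, ((j:ℚ) + 1 + i)) = ∏ i ∈ range s, ((i:ℚ)+j+1) :=
      prod_congr rfl fun i _ => by ring
    rw [he] at h
    rw [h]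
  have h1 := factQ_ne (c+j)
  have h2 := factQ_ne (j+s)
  have h3 : (∏ i ∈ range s, ((i:ℚ)+j+1)) ≠ 0 := (prod_pos fun i _ => by positivity).ne'
  field_simp
  linear_combination (((j+s)! : ℕ):ℚ) * p1 - ((((c+j+s)! : ℕ):ℚ)) * p2

lemma Ff_symm (b c s : ℕ) : Ff b c s = Ff b s c := by
  rw [Ff_eq_S, Ff_eq_S]
  refine prod_congr rfl fun j _ => ?_
  rw [show s+j+c = c+j+s from by omega]
  rw [show s+j = j+s from by omega]
  rw [show j+c = c+j from by omega]
  ring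



-- ==== part 3 ====
open DJ DJ2 DJ3 Matrix

/-- The Toeplitz matrix `M_{t,b,s,s}` of binomial coefficients, with `(i,j)` entry
`C(t, b+i-j)` (interpreted as `0` when `b+i-j < 0`). -/
noncomputable def toeplitzBinom (t b s : ℕ) : Matrix (Fin s) (Fin s) ℤ :=
  Matrix.of fun i j : Fin s =>
    if (j : ℕ) ≤ b + (i : ℕ) then (t.choose (b + (i : ℕ) - (j : ℕ)) : ℤ) else 0

lemma entry_eq (t b : ℕ) {s : ℕ} (i j : Fin s) {s' : ℕ} (b' : ℕ) (i' j' : Fin s')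
    (h : b + (i : ℕ) + (j' : ℕ) = b' + (i' : ℕ) + (j : ℕ)) :
    toeplitzBinom t b s i j = toeplitzBinom t b' s' i' j' := by
  simp only [toeplitzBinom, Matrix.of_apply]
  by_cases hc : (j : ℕ) ≤ b + (i : ℕ)
  · rw [if_pos hc, if_pos (by omega)]
    have harg : b + (i : ℕ) - (j : ℕ) = b' + (i' : ℕ) - (j' : ℕ) := by omega
    rw [harg]
  · rw [if_neg hc, if_neg (by omega)]

lemma subUL (t b n : ℕ) :
    (toeplitzBinom t b (n+2)).submatrix Fin.castSucc Fin.castSucc = toeplitzBinom t b (n+1) := by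
  ext i j
  exact entry_eq t b _ _ b i j (by simp)

lemma subLR (t b n : ℕ) :
    (toeplitzBinom t b (n+2)).submatrix Fin.succ Fin.succ = toeplitzBinom t b (n+1) := by
  ext i j
  refine entry_eq t b _ _ b i j ?_
  simp [Fin.val_succ]
  omega

lemma subUR (t b n : ℕ) :
    (toeplitzBinom t (b+1) (n+2)).submatrix Fin.castSucc Fin.succ = toeplitzBinom t b (n+1) := by
  ext i j
  refine entry_eq t (b+1) _ _ b i j ?_
  simp [Fin.val_succ]
  omega

lemma subLL (t b n : ℕ) :
    (toeplitzBinom t b (n+2)).submatrix Fin.succ Fin.castSucc = toeplitzBinom t (b+1) (n+1) := by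
  ext i j
  refine entry_eq t b _ _ (b+1) i j ?_
  simp [Fin.val_succ]
  omega

lemma subIn (t b n : ℕ) :
    (toeplitzBinom t b (n+2)).submatrix (inE n) (inE n) = toeplitzBinom t b n := by
  ext i j
  refine entry_eq t b _ _ b i j ?_
  have h1 : ((inE n i : Fin (n+2)) : ℕ) = (i : ℕ) + 1 := by simp [inE]
  have h2 : ((inE n j : Fin (n+2)) : ℕ) = (j : ℕ) + 1 := by simp [inE]
  omega

lemma det_b_zero (t s : ℕ) : (toeplitzBinom t 0 s).det = 1 := by
  rw [Matrix.det_of_lowerTriangular (toeplitzBinom t 0 s)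
    (by
      intro i j hij
      have hij' : (i : Fin s) < j := hij
      simp only [toeplitzBinom, Matrix.of_apply]
      rw [if_neg]
      have : (i:ℕ) < (j:ℕ) := hij'
      omega)]
  have h : ∀ i : Fin s, toeplitzBinom t 0 s i i = 1 := by
    intro i
    simp [toeplitzBinom]
  simp [h]

lemma det_c_zero (t s : ℕ) : (toeplitzBinom t t s).det = 1 := by
  rw [Matrix.det_of_upperTriangular
    (by
      intro i j hij
      have hij' : (j : Fin s) < i := hij
      have hlt : (j:ℕ) < (i:ℕ) := hij'
      simp only [toeplitzBinom, Matrix.of_apply]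
      rw [if_pos (by omega)]
      rw [Nat.choose_eq_zero_of_lt (by omega)]
      simp)]
  have h : ∀ i : Fin s, toeplitzBinom t t s i i = 1 := by
    intro i
    simp [toeplitzBinom]
  simp [h]

lemma det_eq_Ff (s : ℕ) : ∀ b c : ℕ, ((toeplitzBinom (b+c) b s).det : ℚ) = Ff b c s := by
  induction s using Nat.strong_induction_on with
  | _ s ih =>
    match s with
    | 0 => intro b c; simp [Matrix.det_fin_zero, Ff]
    | 1 =>
      intro b c
      rw [Matrix.det_fin_one]
      have h : toeplitzBinom (b+c) b 1 0 0 = ((b+c).choose b : ℤ) := by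
        simp [toeplitzBinom]
      rw [h, Ff]
      simp only [Finset.prod_range_one, Nat.add_zero, Nat.factorial_zero]
      push_cast
      rw [Nat.cast_choose ℚ (Nat.le_add_right b c)]
      rw [show b + c - b = c from by omega]
      ring
    | (n+2) =>
      intro b c
      match b, c with
      | 0, c =>
        rw [det_b_zero, Int.cast_one, Ff]
        symm
        refine Finset.prod_eq_one fun i _ => ?_
        rw [show (0:ℕ)+c+i = c+i from by omega, show (0:ℕ)+i = i from by omega]
        rw [div_self (mul_ne_zero (factQ_ne _) (factQ_ne _))]
      | (b+1), 0 =>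
        rw [show (b+1)+0 = b+1 from by omega, det_c_zero, Int.cast_one, Ff]
        symm
        refine Finset.prod_eq_one fun i _ => ?_
        rw [show (b+1)+0+i = (b+1)+i from by omega, show (0:ℕ)+i = i from by omega]
        rw [div_eq_one_iff_eq (mul_ne_zero (factQ_ne _) (factQ_ne _))]
        ring
      | (b+1), (c+1) =>
        have hD := DJ3.dodgson (toeplitzBinom ((b+1)+(c+1)) (b+1) (n+2))
        rw [subUL, subLR, subIn, subLL, subUR] at hD
        have hQ := congrArg (fun z : ℤ => (z : ℚ)) hD
        simp only [Int.cast_mul, Int.cast_sub] at hQ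
        have i1 : ((toeplitzBinom ((b+1)+(c+1)) (b+1) n).det : ℚ) = Ff (b+1) (c+1) n :=
          ih n (by omega) (b+1) (c+1)
        have i4 : ((toeplitzBinom ((b+1)+(c+1)) (b+1) (n+1)).det : ℚ) = Ff (b+1) (c+1) (n+1) :=
          ih (n+1) (by omega) (b+1) (c+1)
        have i2 : ((toeplitzBinom ((b+1)+(c+1)) b (n+1)).det : ℚ) = Ff b (c+2) (n+1) := by
          rw [show (b+1)+(c+1) = b+(c+2) from by omega]
          exact ih (n+1) (by omega) b (c+2)
        have i3 : ((toeplitzBinom ((b+1)+(c+1)) (b+1+1) (n+1)).det : ℚ) = Ff (b+2) c (n+1) := by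
          rw [show (b+1)+(c+1) = (b+2)+c from by omega]
          exact ih (n+1) (by omega) (b+2) c
        rw [i1, i4, i2, i3] at hQ
        have key : ((toeplitzBinom ((b+1)+(c+1)) (b+1) (n+2)).det : ℚ) * Ff (b+1) (c+1) n
            = Ff (b+1) (c+1) (n+2) * Ff (b+1) (c+1) n := by
          rw [hQ]
          linear_combination - quad b c n
        exact mul_right_cancel₀ (Ff_ne (b+1) (c+1) n) key

theorem stmt2 (t b s : ℕ) (hb : b + 1 ≤ t) (hs : 1 ≤ s) :
    (toeplitzBinom t b s).det = (toeplitzBinom (b + s) b (t - b)).det := by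
  have h1 : ((toeplitzBinom t b s).det : ℚ) = Ff b (t-b) s := by
    have h := det_eq_Ff s b (t-b)
    rw [show b+(t-b) = t from by omega] at h
    exact h
  have h2 : ((toeplitzBinom (b+s) b (t-b)).det : ℚ) = Ff b s (t-b) := det_eq_Ff (t-b) b s
  have h3 := h1.trans ((Ff_symm b (t-b) s).trans h2.symm)
  exact_mod_cast h3
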